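/- Define the weight of a permutation π ∈ S_n as weight(π) := q^{N_{[1,2,3]}(π)} · Π_{i=1}^n x_i^{c_i(π)}, where c_i(π) = |{(a,b) : 1 ≤ a < b ≤ n, π_a = i < π_b}|, and let P_n(q; x_1,...,x_n) := Σ_{π ∈ S_n} weight(π). Then P_n satisfies the Noonan–Zeilberger functional equation P_n(q; x_1,...,x_n) = Σ_{i=1}^n x_i^{n-i} · P_{n-1}(q; x_1,...,x_{i-1}, q·x_{i+1},..., q·x_n). -/

import Mathlib

open Finset

/-- Number of occurrences of the increasing pattern [1,2,3] in `π`. -/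
def N3 {n : ℕ} (π : Equiv.Perm (Fin n)) : ℕ :=
  (Finset.univ.filter fun t : Fin n × Fin n × Fin n =>
    t.1 < t.2.1 ∧ t.2.1 < t.2.2 ∧ π t.1 < π t.2.1 ∧ π t.2.1 < π t.2.2).card

/-- `c π i` = number of pairs a < b with π(a) = i < π(b). -/
def c {n : ℕ} (π : Equiv.Perm (Fin n)) (i : Fin n) : ℕ :=
  (Finset.univ.filter fun p : Fin n × Fin n => p.1 < p.2 ∧ π p.1 = i ∧ i < π p.2).card

/-- The weight enumerator P_n(q; x_1,...,x_n) = Σ_π q^{N_{123}(π)} Π_i x_i^{c_i(π)}. -/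
noncomputable def P (n : ℕ) (q : ℝ) (x : Fin n → ℝ) : ℝ :=
  ∑ π : Equiv.Perm (Fin n), q ^ N3 π * ∏ i, x i ^ c π i

/-- The insertion map: `NZphi (p, e)` is the permutation sending `0 ↦ p` and
`k.succ ↦ p.succAbove (e k)`. -/
def NZphi {n : ℕ} (pe : Fin (n + 1) × Equiv.Perm (Fin n)) : Equiv.Perm (Fin (n + 1)) :=
  (finSuccEquiv n).trans ((Equiv.optionCongr pe.2).trans (finSuccEquiv' pe.1).symm)

lemma NZphi_zero {n : ℕ} (p : Fin (n + 1)) (e : Equiv.Perm (Fin n)) :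
    NZphi (p, e) 0 = p := by
  simp [NZphi]

lemma NZphi_succ {n : ℕ} (p : Fin (n + 1)) (e : Equiv.Perm (Fin n)) (k : Fin n) :
    NZphi (p, e) k.succ = p.succAbove (e k) := by
  simp [NZphi, finSuccEquiv_succ, finSuccEquiv'_symm_some]

lemma NZphi_eq_iff {n : ℕ} (p : Fin (n + 1)) (e : Equiv.Perm (Fin n)) (a : Fin (n + 1)) :
    NZphi (p, e) a = p ↔ a = 0 := by
  refine Fin.cases ?_ (fun k => ?_) a
  · simp [NZphi_zero]
  · simp [NZphi_succ, Fin.succAbove_ne, Fin.succ_ne_zero]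

lemma NZphi_bijective {n : ℕ} :
    Function.Bijective (NZphi : Fin (n + 1) × Equiv.Perm (Fin n) → Equiv.Perm (Fin (n + 1))) := by
  rw [Fintype.bijective_iff_injective_and_card]
  constructor
  · rintro ⟨p, e⟩ ⟨p', e'⟩ h
    have hp : p = p' := by
      have := congrArg (fun f : Equiv.Perm (Fin (n + 1)) => f 0) h
      simpa [NZphi_zero] using this
    subst hp
    have he : e = e' := by
      ext k
      have := congrArg (fun f : Equiv.Perm (Fin (n + 1)) => f k.succ) h
      simp only [NZphi_succ] at this
      exact_mod_cast congrArg Fin.val ((Fin.succAbove_right_inj (p := p)).mp this)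
    rw [he]
  · simp [Fintype.card_perm, Nat.factorial_succ]

lemma card_filter_le_val {n : ℕ} (m : ℕ) :
    ((univ : Finset (Fin n)).filter fun j : Fin n => m ≤ (j : ℕ)).card = n - m := by
  have : ((univ : Finset (Fin n)).filter fun j : Fin n => m ≤ (j : ℕ)).card =
      (Finset.Ico m n).card := by
    refine Finset.card_bij (fun j _ => (j : ℕ)) ?_ ?_ ?_
    · intro a ha
      simp only [mem_filter, mem_univ, true_and] at ha
      exact Finset.mem_Ico.mpr ⟨ha, a.isLt⟩
    · intro a _ b _ h
      exact Fin.val_injective h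
    · intro b hb
      rw [Finset.mem_Ico] at hb
      exact ⟨⟨b, hb.2⟩, by simp [hb.1], rfl⟩
  rw [this, Nat.card_Ico]

lemma lt_succAbove_iff' {n : ℕ} (p : Fin (n + 1)) (j : Fin n) :
    p < p.succAbove j ↔ (p : ℕ) ≤ (j : ℕ) := by
  rw [Fin.lt_succAbove_iff_le_castSucc, Fin.le_def, Fin.coe_castSucc]

/-- Key lemma 1: `c (NZphi (p,e)) p = n - p`. -/
lemma c_NZphi_self {n : ℕ} (p : Fin (n + 1)) (e : Equiv.Perm (Fin n)) :
    c (NZphi (p, e)) p = n - (p : ℕ) := by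
  rw [← card_filter_le_val (n := n) (p : ℕ)]
  unfold c
  rw [show ((univ : Finset (Fin n)).filter fun j : Fin n => (p : ℕ) ≤ (j : ℕ)).card =
      ((univ : Finset (Fin n)).filter fun k : Fin n => (p : ℕ) ≤ ((e k : Fin n) : ℕ)).card from ?_]
  · refine (Finset.card_bij (fun (t : Fin n) _ => ((0 : Fin (n + 1)), t.succ)) ?_ ?_ ?_).symm
    · intro a ha
      simp only [mem_filter, mem_univ, true_and] at ha ⊢
      refine ⟨Fin.succ_pos a, NZphi_zero p e, ?_⟩
      rw [NZphi_succ]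
      exact (lt_succAbove_iff' p (e a)).mpr ha
    · intro a _ b _ h
      exact Fin.succ_injective _ (congrArg Prod.snd h)
    · rintro ⟨a, b⟩ hb
      simp only [mem_filter, mem_univ, true_and] at hb
      obtain ⟨hab, ha, hb'⟩ := hb
      have ha0 : a = 0 := (NZphi_eq_iff p e a).mp ha
      subst ha0
      have hb0 : b ≠ 0 := Fin.pos_iff_ne_zero.mp hab
      refine ⟨b.pred hb0, ?_, ?_⟩
      · simp only [mem_filter, mem_univ, true_and]
        have : NZphi (p, e) ((b.pred hb0).succ) = p.succAbove (e (b.pred hb0)) :=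
          NZphi_succ p e _
        rw [Fin.succ_pred] at this
        rw [← lt_succAbove_iff', ← this]
        exact hb'
      · simp [Fin.succ_pred]
  · refine Finset.card_bij (fun j _ => e.symm j) ?_ ?_ ?_
    · intro a ha
      simp only [mem_filter, mem_univ, true_and] at ha ⊢
      simpa using ha
    · intro a _ b _ h
      exact e.symm.injective h
    · intro b hb
      simp only [mem_filter, mem_univ, true_and] at hb
      exact ⟨e b, by simpa using hb, by simp⟩

/-- Key lemma 2: `c (NZphi (p,e)) (p.succAbove j) = c e j`. -/
lemma c_NZphi_succAbove {n : ℕ} (p : Fin (n + 1)) (e : Equiv.Perm (Fin n)) (j : Fin n) :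
    c (NZphi (p, e)) (p.succAbove j) = c e j := by
  unfold c
  refine (Finset.card_bij (fun (t : Fin n × Fin n) _ => (t.1.succ, t.2.succ)) ?_ ?_ ?_).symm
  · rintro ⟨k, m⟩ hkm
    simp only [mem_filter, mem_univ, true_and] at hkm ⊢
    obtain ⟨h1, h2, h3⟩ := hkm
    refine ⟨Fin.succ_lt_succ_iff.mpr h1, ?_, ?_⟩
    · rw [NZphi_succ, h2]
    · rw [NZphi_succ]
      exact Fin.succAbove_lt_succAbove_iff.mpr h3
  · rintro ⟨a, b⟩ _ ⟨a', b'⟩ _ h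
    have h1 := congrArg Prod.fst h
    have h2 := congrArg Prod.snd h
    simp only at h1 h2
    exact Prod.ext (Fin.succ_injective _ h1) (Fin.succ_injective _ h2)
  · rintro ⟨a, b⟩ hab
    simp only [mem_filter, mem_univ, true_and] at hab
    obtain ⟨h1, h2, h3⟩ := hab
    have ha0 : a ≠ 0 := by
      intro h
      rw [h, NZphi_zero] at h2
      exact Fin.succAbove_ne p j h2.symm
    have hb0 : b ≠ 0 := by
      intro h
      rw [h] at h1
      exact absurd h1 (Fin.not_lt.mpr (Fin.zero_le a))
    refine ⟨(a.pred ha0, b.pred hb0), ?_, ?_⟩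
    · simp only [mem_filter, mem_univ, true_and]
      have hA : NZphi (p, e) ((a.pred ha0).succ) = p.succAbove (e (a.pred ha0)) := NZphi_succ p e _
      have hB : NZphi (p, e) ((b.pred hb0).succ) = p.succAbove (e (b.pred hb0)) := NZphi_succ p e _
      rw [Fin.succ_pred] at hA hB
      refine ⟨?_, ?_, ?_⟩
      · rw [← Fin.succ_lt_succ_iff, Fin.succ_pred, Fin.succ_pred]; exact h1
      · exact Fin.succAbove_right_inj.mp (by rw [← hA]; exact h2)
      · rw [← Fin.succAbove_lt_succAbove_iff (p := p), ← hB]; exact h3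
    · simp [Fin.succ_pred]

/-- Key lemma 3: `N3 (NZphi (p,e)) = N3 e + Σ_{j ≥ p} c e j`. -/
lemma N3_NZphi {n : ℕ} (p : Fin (n + 1)) (e : Equiv.Perm (Fin n)) :
    N3 (NZphi (p, e)) = N3 e +
      ∑ j ∈ (univ : Finset (Fin n)).filter (fun j : Fin n => (p : ℕ) ≤ (j : ℕ)), c e j := by
  classical
  set π := NZphi (p, e) with hπ
  set S := (Finset.univ.filter fun t : Fin (n+1) × Fin (n+1) × Fin (n+1) =>
    t.1 < t.2.1 ∧ t.2.1 < t.2.2 ∧ π t.1 < π t.2.1 ∧ π t.2.1 < π t.2.2) with hS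
  have hsplit : (S.filter fun t => t.1 = 0).card + (S.filter fun t => ¬ t.1 = 0).card = S.card :=
    Finset.card_filter_add_card_filter_not _
  have hcard1 : (S.filter fun t => ¬ t.1 = 0).card = N3 e := by
    unfold N3
    refine (Finset.card_bij (fun (t : Fin n × Fin n × Fin n) _ => (t.1.succ, t.2.1.succ, t.2.2.succ)) ?_ ?_ ?_).symm
    · rintro ⟨k, l, m⟩ h
      simp only [mem_filter, mem_univ, true_and] at h
      obtain ⟨h1, h2, h3, h4⟩ := h
      simp only [hS, mem_filter, mem_univ, true_and]
      refine ⟨⟨Fin.succ_lt_succ_iff.mpr h1, Fin.succ_lt_succ_iff.mpr h2, ?_, ?_⟩,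
        Fin.succ_ne_zero _⟩
      · rw [hπ, NZphi_succ, NZphi_succ]; exact Fin.succAbove_lt_succAbove_iff.mpr h3
      · rw [hπ, NZphi_succ, NZphi_succ]; exact Fin.succAbove_lt_succAbove_iff.mpr h4
    · rintro ⟨a, b, cc⟩ _ ⟨a', b', c'⟩ _ h
      have h1 := congrArg Prod.fst h
      have h2 := congrArg (Prod.fst ∘ Prod.snd) h
      have h3 := congrArg (Prod.snd ∘ Prod.snd) h
      simp only [Function.comp] at h1 h2 h3
      exact Prod.ext (Fin.succ_injective _ h1)
        (Prod.ext (Fin.succ_injective _ h2) (Fin.succ_injective _ h3))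
    · rintro ⟨a, b, cc⟩ h
      simp only [hS, mem_filter, mem_univ, true_and] at h
      obtain ⟨⟨h1, h2, h3, h4⟩, ha0⟩ := h
      have hb0 : b ≠ 0 := by
        intro hh; rw [hh] at h1; exact absurd h1 (Fin.not_lt.mpr (Fin.zero_le a))
      have hc0 : cc ≠ 0 := by
        intro hh; rw [hh] at h2; exact absurd h2 (Fin.not_lt.mpr (Fin.zero_le b))
      refine ⟨(a.pred ha0, b.pred hb0, cc.pred hc0), ?_, ?_⟩
      · simp only [mem_filter, mem_univ, true_and]
        have hA : π ((a.pred ha0).succ) = p.succAbove (e (a.pred ha0)) := NZphi_succ p e _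
        have hB : π ((b.pred hb0).succ) = p.succAbove (e (b.pred hb0)) := NZphi_succ p e _
        have hC : π ((cc.pred hc0).succ) = p.succAbove (e (cc.pred hc0)) := NZphi_succ p e _
        rw [Fin.succ_pred] at hA hB hC
        refine ⟨?_, ?_, ?_, ?_⟩
        · rw [← Fin.succ_lt_succ_iff, Fin.succ_pred, Fin.succ_pred]; exact h1
        · rw [← Fin.succ_lt_succ_iff, Fin.succ_pred, Fin.succ_pred]; exact h2
        · rw [← Fin.succAbove_lt_succAbove_iff (p := p), ← hA, ← hB]; exact h3
        · rw [← Fin.succAbove_lt_succAbove_iff (p := p), ← hB, ← hC]; exact h4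
      · simp [Fin.succ_pred]
  have hcard0 : (S.filter fun t => t.1 = 0).card =
      ∑ j ∈ (univ : Finset (Fin n)).filter (fun j : Fin n => (p : ℕ) ≤ (j : ℕ)), c e j := by
    have hU : (S.filter fun t => t.1 = 0).card =
        ((univ : Finset (Fin n × Fin n)).filter fun t =>
          t.1 < t.2 ∧ (p : ℕ) ≤ ((e t.1 : Fin n) : ℕ) ∧ e t.1 < e t.2).card := by
      refine (Finset.card_bij (fun (t : Fin n × Fin n) _ => ((0 : Fin (n+1)), t.1.succ, t.2.succ)) ?_ ?_ ?_).symm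
      · rintro ⟨k, m⟩ h
        simp only [mem_filter, mem_univ, true_and] at h
        obtain ⟨h1, h2, h3⟩ := h
        simp only [hS, mem_filter, mem_univ, true_and]
        refine ⟨⟨Fin.succ_pos _, Fin.succ_lt_succ_iff.mpr h1, ?_, ?_⟩, trivial⟩
        · rw [hπ, NZphi_zero, NZphi_succ]; exact (lt_succAbove_iff' p (e k)).mpr h2
        · rw [hπ, NZphi_succ, NZphi_succ]; exact Fin.succAbove_lt_succAbove_iff.mpr h3
      · rintro ⟨a, b⟩ _ ⟨a', b'⟩ _ h
        have h2 := congrArg (Prod.fst ∘ Prod.snd) h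
        have h3 := congrArg (Prod.snd ∘ Prod.snd) h
        simp only [Function.comp] at h2 h3
        exact Prod.ext (Fin.succ_injective _ h2) (Fin.succ_injective _ h3)
      · rintro ⟨a, b, cc⟩ h
        simp only [hS, mem_filter, mem_univ, true_and] at h
        obtain ⟨⟨h1, h2, h3, h4⟩, ha0⟩ := h
        subst ha0
        have hb0 : b ≠ 0 := Fin.pos_iff_ne_zero.mp h1
        have hc0 : cc ≠ 0 := by
          intro hh; rw [hh] at h2; exact absurd h2 (Fin.not_lt.mpr (Fin.zero_le b))
        refine ⟨(b.pred hb0, cc.pred hc0), ?_, ?_⟩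
        · simp only [mem_filter, mem_univ, true_and]
          have hB : π ((b.pred hb0).succ) = p.succAbove (e (b.pred hb0)) := NZphi_succ p e _
          have hC : π ((cc.pred hc0).succ) = p.succAbove (e (cc.pred hc0)) := NZphi_succ p e _
          rw [Fin.succ_pred] at hB hC
          refine ⟨?_, ?_, ?_⟩
          · rw [← Fin.succ_lt_succ_iff, Fin.succ_pred, Fin.succ_pred]; exact h2
          · have h0 : π 0 = p := NZphi_zero p e
            rw [← lt_succAbove_iff', ← hB, ← h0]; exact h3
          · rw [← Fin.succAbove_lt_succAbove_iff (p := p), ← hB, ← hC]; exact h4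
        · simp [Fin.succ_pred]
    rw [hU]
    rw [Finset.card_eq_sum_card_fiberwise
      (f := fun t : Fin n × Fin n => e t.1)
      (t := (univ : Finset (Fin n)).filter (fun j : Fin n => (p : ℕ) ≤ (j : ℕ)))
      (fun t ht => by
        simp only [mem_coe, mem_filter, mem_univ, true_and] at ht ⊢
        exact ht.2.1)]
    apply Finset.sum_congr rfl
    intro j hj
    simp only [mem_filter, mem_univ, true_and] at hj
    unfold c
    congr 1
    ext t
    simp only [mem_filter, mem_univ, true_and, Finset.filter_filter]
    constructor
    · rintro ⟨⟨h1, h2, h3⟩, h4⟩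
      exact ⟨h1, h4, h4 ▸ h3⟩
    · rintro ⟨h1, h2, h3⟩
      exact ⟨⟨h1, h2 ▸ hj, h2 ▸ h3⟩, h2⟩
  have hNS : N3 π = S.card := rfl
  omega

theorem noonan_zeilberger_functional_equation (n : ℕ) (q : ℝ) (x : Fin (n + 1) → ℝ) :
    P (n + 1) q x =
      ∑ i : Fin (n + 1), x i ^ (n - (i : ℕ)) *
        P n q (fun j : Fin n =>
          if (j : ℕ) < (i : ℕ) then x j.castSucc else q * x j.succ) := by
  classical
  unfold P
  rw [← Fintype.sum_bijective NZphi NZphi_bijective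
    (fun pe => q ^ N3 (NZphi pe) * ∏ i, x i ^ c (NZphi pe) i)
    (fun π => q ^ N3 π * ∏ i, x i ^ c π i) (fun _ => rfl)]
  rw [Fintype.sum_prod_type]
  apply Finset.sum_congr rfl
  intro p _
  rw [Finset.mul_sum]
  apply Finset.sum_congr rfl
  intro e _
  rw [N3_NZphi p e, Fin.prod_univ_succAbove (fun i => x i ^ c (NZphi (p, e)) i) p]
  rw [c_NZphi_self p e]
  have hprod : ∀ j : Fin n, x (p.succAbove j) ^ c (NZphi (p, e)) (p.succAbove j) =
      x (p.succAbove j) ^ c e j := fun j => by rw [c_NZphi_succAbove]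
  rw [Finset.prod_congr rfl (fun j _ => hprod j)]
  have hx : ∀ j : Fin n,
      (if (j : ℕ) < (p : ℕ) then x j.castSucc else q * x j.succ) ^ c e j =
      (if (j : ℕ) < (p : ℕ) then (1 : ℝ) else q ^ c e j) * x (p.succAbove j) ^ c e j := by
    intro j
    by_cases h : (j : ℕ) < (p : ℕ)
    · rw [if_pos h, if_pos h, Fin.succAbove_of_castSucc_lt p j (by
        rw [Fin.lt_def, Fin.coe_castSucc]; exact h), one_mul]
    · rw [if_neg h, if_neg h, Fin.succAbove_of_le_castSucc p j (by
        rw [Fin.le_def, Fin.coe_castSucc]; exact Nat.le_of_not_lt h), mul_pow]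
  have hmain : ∏ j : Fin n, (if (j : ℕ) < (p : ℕ) then x j.castSucc else q * x j.succ) ^ c e j =
      (∏ j ∈ (univ : Finset (Fin n)).filter (fun j : Fin n => (p : ℕ) ≤ (j : ℕ)), q ^ c e j) *
        ∏ j : Fin n, x (p.succAbove j) ^ c e j := by
    rw [Finset.prod_congr rfl (fun j _ => hx j), Finset.prod_mul_distrib]
    congr 1
    rw [Finset.prod_ite, Finset.prod_const_one, one_mul]
    apply Finset.prod_congr _ (fun _ _ => rfl)
    ext j
    simp [Nat.not_lt]
  rw [hmain]
  rw [pow_add, Finset.prod_pow_eq_pow_sum]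
  ring
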